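/- Let p be an odd prime and n ≥ 1, and let b_K, c_K ∈ ℤ with d_K := b_K² − 4c_K. Suppose γ = [[t − b_K s, −c_K s],[s, t]] ∈ GL₂(ℤ/pⁿℤ) satisfies γ² = I₂, γ ≠ I₂, and 2t − b_K s ≡ 0 (mod p). Then p ∤ d_K and d_K is a quadratic residue modulo p (indeed d_K s² ≡ 4 (mod p)). -/

import Mathlib

/-- Case 2 in the proof of Lemma 7.2: if an order-2 element
`γ = [[t - b_K s, -c_K s],[s, t]]` of the Cartan subgroup of `GL₂(ℤ/pⁿℤ)`
(`p` an odd prime) has trace `2t - b_K s` divisible by `p`, then `p ∤ d_K` and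
`d_K` is a quadratic residue mod `p`; indeed `d_K s² ≡ 4 (mod p)`. -/
theorem stmt4 (p : ℕ) (hp : p.Prime) (hodd : p ≠ 2) (n : ℕ) (hn : 0 < n) (bK cK : ℤ)
    (s t : ZMod (p ^ n)) (γ : Matrix (Fin 2) (Fin 2) (ZMod (p ^ n)))
    (hγ : γ = !![t - (bK : ZMod (p ^ n)) * s, -((cK : ZMod (p ^ n)) * s); s, t])
    (hunit : IsUnit γ) (hsq : γ * γ = 1) (hne : γ ≠ 1)
    (htr : (ZMod.castHom (dvd_pow_self p hn.ne') (ZMod p))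
      (2 * t - (bK : ZMod (p ^ n)) * s) = 0) :
    ¬ (p : ℤ) ∣ (bK ^ 2 - 4 * cK) ∧
      ((bK ^ 2 - 4 * cK : ℤ) : ZMod p) *
        ((ZMod.castHom (dvd_pow_self p hn.ne') (ZMod p)) s) ^ 2 = 4 ∧
      IsSquare ((bK ^ 2 - 4 * cK : ℤ) : ZMod p) := by
  haveI : Fact p.Prime := ⟨hp⟩
  subst hγ
  set f := ZMod.castHom (dvd_pow_self p hn.ne') (ZMod p) with hf
  set S := f s with hS
  set T := f t with hT
  -- entry (1,1) of γ² = 1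
  have h11 : s * -((cK : ZMod (p ^ n)) * s) + t * t = 1 := by
    have := congrFun (congrFun hsq 1) 1
    simpa [Matrix.mul_apply, Fin.sum_univ_two, Matrix.one_apply] using this
  have e2 : S * -((cK : ZMod p) * S) + T * T = 1 := by
    have := congrArg f h11
    simpa [map_add, map_mul, map_neg, map_one] using this
  have e1 : 2 * T - (bK : ZMod p) * S = 0 := by
    have := htr
    simpa [map_sub, map_mul, map_ofNat] using this
  have key : ((bK ^ 2 - 4 * cK : ℤ) : ZMod p) * S ^ 2 = 4 := by
    push_cast
    linear_combination (-(((bK : ZMod p)) * S + 2 * T)) * e1 + 4 * e2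
  have h4 : (4 : ZMod p) ≠ 0 := by
    have h2 : (2 : ZMod p) ≠ 0 := by
      have hnd : ¬ (p ∣ 2) := fun h =>
        hodd ((Nat.prime_dvd_prime_iff_eq hp Nat.prime_two).mp h)
      intro h
      exact hnd ((ZMod.natCast_eq_zero_iff 2 p).mp (by exact_mod_cast h))
    have : (4 : ZMod p) = 2 * 2 := by norm_num
    rw [this]
    exact mul_ne_zero h2 h2
  have hd : ((bK ^ 2 - 4 * cK : ℤ) : ZMod p) ≠ 0 := by
    intro h
    rw [h, zero_mul] at key
    exact h4 key.symm
  have hSne : S ≠ 0 := by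
    intro h
    rw [h] at key
    simp at key
    exact h4 key.symm
  refine ⟨fun h => hd ((ZMod.intCast_zmod_eq_zero_iff_dvd _ _).mpr h), key, ?_⟩
  refine ⟨2 * S⁻¹, ?_⟩
  field_simp
  have key' := key
  push_cast at key'
  push_cast
  linear_combination key'
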